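/- arXiv:math/9606228 — 2 statements merged into one kernel-verified Lean document; each statement's English description precedes it below -/
import Mathlib

section
/- Let A ⊆ 2^ω, η ∈ 2^ω, and ⟨r,w⟩ a condition of Q^A. Then η ∈ w if and only if there exists M ∈ ω such that for every m ≥ M and every condition ⟨r′,w′⟩ of Q^A with ⟨r,w⟩ ≤ ⟨r′,w′⟩ and η↾m ∈ dom(r′), one has r′(η↾m) = 1. -/
/-- Restriction `η↾m` of `η ∈ 2^ω` to its first `m` entries, as a finite binary sequence. -/
def restrict (η : ℕ → Bool) (m : ℕ) : List Bool := List.ofFn (fun i : Fin m => η i)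

/-- Conditions of the forcing notion `Q^A`: pairs `⟨r, w⟩` where `r` is a finite partial
function from `2^{<ω}` to `{0,1}` (coded with values in `Option Bool`) and `w` is a finite
subset of `A`. -/
def QACond (A : Set (ℕ → Bool)) : Type :=
  {c : (List Bool → Option Bool) × Set (ℕ → Bool) //
    {ν : List Bool | c.1 ν ≠ none}.Finite ∧ c.2 ⊆ A ∧ c.2.Finite}

/-- The order of `Q^A`: `⟨r₁,w₁⟩ ≤ ⟨r₂,w₂⟩` iff `r₁ ⊆ r₂`, `w₁ ⊆ w₂`, and every
`ν ∈ dom r₂ \ dom r₁` which is an initial segment of some `η ∈ w₁` gets value `1`. -/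
def QACond.le {A : Set (ℕ → Bool)} (c₁ c₂ : QACond A) : Prop :=
  (∀ (ν : List Bool) (b : Bool), c₁.1.1 ν = some b → c₂.1.1 ν = some b) ∧
  c₁.1.2 ⊆ c₂.1.2 ∧
  ∀ ν : List Bool, c₂.1.1 ν ≠ none → c₁.1.1 ν = none →
    (∃ η ∈ c₁.1.2, restrict η ν.length = ν) → c₂.1.1 ν = some true

lemma restrict_length (η : ℕ → Bool) (m : ℕ) : (restrict η m).length = m := by
  simp [restrict]

/-- For a condition `⟨r,w⟩` of `Q^A` and `η ∈ 2^ω`: `η ∈ w` iff there is `M` such that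
every extension `⟨r′,w′⟩ ≥ ⟨r,w⟩` with `η↾m ∈ dom r′` for some `m ≥ M` has
`r′(η↾m) = 1`. (That is, `⟨r,w⟩` forces `ṙ(η↾m) = 1` for all but finitely many `m`
iff `η ∈ w`.) -/
theorem qa_membership_characterization (A : Set (ℕ → Bool)) (η : ℕ → Bool) (c : QACond A) :
    η ∈ c.1.2 ↔
      ∃ M : ℕ, ∀ m ≥ M, ∀ c' : QACond A, QACond.le c c' →
        c'.1.1 (restrict η m) ≠ none → c'.1.1 (restrict η m) = some true := by
  obtain ⟨hfin, hsub, hwfin⟩ := c.2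
  -- bound on lengths of the domain of r
  obtain ⟨N, hN⟩ := (hfin.image List.length).bddAbove
  have hNle : ∀ ν : List Bool, c.1.1 ν ≠ none → ν.length ≤ N := by
    intro ν hv
    exact hN (Set.mem_image_of_mem _ hv)
  constructor
  · intro hη
    refine ⟨N + 1, fun m hm c' hle h' => ?_⟩
    have hnone : c.1.1 (restrict η m) = none := by
      by_contra h
      have := hNle _ h
      rw [restrict_length] at this
      omega
    exact hle.2.2 _ h' hnone ⟨η, hη, by rw [restrict_length]⟩
  · rintro ⟨M, hM⟩
    by_contra hη
    -- for each η' ∈ w, a point of disagreement with η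
    set g : (ℕ → Bool) → ℕ := fun η' => sInf {n | η' n ≠ η n} with hg
    have hgmem : ∀ η' ∈ c.1.2, η' (g η') ≠ η (g η') := by
      intro η' hη'
      have hne : η' ≠ η := fun h => hη (h ▸ hη')
      have : {n | η' n ≠ η n}.Nonempty := Function.ne_iff.mp hne
      exact Nat.sInf_mem this
    obtain ⟨B, hB⟩ := (hwfin.image g).bddAbove
    set m := max M (max (N + 1) (B + 1)) with hmdef
    have hmM : M ≤ m := le_max_left _ _
    have hmN : N < m := by
      have := le_max_right M (max (N + 1) (B + 1))
      have := le_max_left (N + 1) (B + 1)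
      omega
    have hmB : B < m := by
      have := le_max_right M (max (N + 1) (B + 1))
      have := le_max_right (N + 1) (B + 1)
      omega
    -- the extension setting r'(η↾m) = false
    classical
    set r' : List Bool → Option Bool :=
      fun ν => if ν = restrict η m then some false else c.1.1 ν with hr'
    have hdom : {ν : List Bool | r' ν ≠ none} ⊆ insert (restrict η m) {ν | c.1.1 ν ≠ none} := by
      intro ν hν
      simp only [hr', Set.mem_setOf_eq] at hν
      by_cases h : ν = restrict η m
      · exact h ▸ Set.mem_insert _ _
      · simp [h] at hν
        exact Set.mem_insert_of_mem _ hν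
    have hrm : c.1.1 (restrict η m) = none := by
      by_contra h
      have := hNle _ h
      rw [restrict_length] at this
      omega
    set c' : QACond A := ⟨⟨r', c.1.2⟩, (hfin.insert _).subset hdom, hsub, hwfin⟩ with hc'
    have hle : QACond.le c c' := by
      refine ⟨?_, le_refl _, ?_⟩
      · intro ν b hb
        show r' ν = some b
        have : ν ≠ restrict η m := by
          intro h
          rw [h, hrm] at hb; exact Option.some_ne_none b hb.symm
        simp [hr', this, hb]
      · intro ν h1 h2 h3
        show r' ν = some true
        by_cases h : ν = restrict η m
        · exfalso
          obtain ⟨η', hη', hres⟩ := h3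
          subst h
          rw [restrict_length] at hres
          have hdis := hgmem η' hη'
          have hglt : g η' < m := by
            have : g η' ≤ B := hB (Set.mem_image_of_mem _ hη')
            omega
          have : η' (g η') = η (g η') := by
            have := congrArg (fun l : List Bool => l[g η']?) hres
            simpa [restrict, List.getElem?_ofFn, hglt] using this
          exact hdis this
        · exfalso
          have : r' ν = none := by simp [hr', h, h2]
          exact h1 this
    have := hM m hmM c' hle (by show r' _ ≠ none; simp [hr'])
    simp [hc', hr'] at this
end

section
/- Let A ⊆ 2^ω be a set which is not analytic as a subset of the Cantor space 2^ω. Then there is no complete embedding of the forcing notion Q^A into any ccc Souslin forcing notion. -/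
/-- Compatibility in a forcing notion: a common upper bound exists. -/
def PCompat {P : Type} (le : P → P → Prop) (p q : P) : Prop :=
  ∃ r, le p r ∧ le q r

/-- A set `A ⊆ P` is an antichain if its elements are pairwise incompatible. -/
def PAntichain {P : Type} (le : P → P → Prop) (A : Set P) : Prop :=
  ∀ p ∈ A, ∀ q ∈ A, p ≠ q → ¬ PCompat le p q

/-- A maximal antichain: an antichain such that every condition is compatible
with some of its members. -/
def PMaxAntichain {P : Type} (le : P → P → Prop) (A : Set P) : Prop :=
  PAntichain le A ∧ ∀ p : P, ∃ q ∈ A, PCompat le p q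

/-- Compatibility of two elements within the set of conditions `Q` of a Souslin forcing:
a common upper bound belonging to `Q` exists. -/
def QCompat (Q : Set (ℕ → ℕ)) (le : (ℕ → ℕ) → (ℕ → ℕ) → Prop) (p q : ℕ → ℕ) : Prop :=
  ∃ r ∈ Q, le p r ∧ le q r

/-- A ccc Souslin forcing notion: the set of conditions is an analytic subset `Q` of Baire
space, the order and incompatibility relations (restricted to `Q`) are analytic subsets of
`ω^ω × ω^ω`, `≤` partially orders `Q`, and every antichain is countable. -/
structure SouslinCCC where
  /-- the set of conditions -/
  Q : Set (ℕ → ℕ)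
  /-- the order relation -/
  le : (ℕ → ℕ) → (ℕ → ℕ) → Prop
  analytic_cond : MeasureTheory.AnalyticSet Q
  analytic_le : MeasureTheory.AnalyticSet
    {x : (ℕ → ℕ) × (ℕ → ℕ) | x.1 ∈ Q ∧ x.2 ∈ Q ∧ le x.1 x.2}
  analytic_incompat : MeasureTheory.AnalyticSet
    {x : (ℕ → ℕ) × (ℕ → ℕ) | x.1 ∈ Q ∧ x.2 ∈ Q ∧ ¬ QCompat Q le x.1 x.2}
  refl : ∀ p ∈ Q, le p p
  trans : ∀ p ∈ Q, ∀ q ∈ Q, ∀ r ∈ Q, le p q → le q r → le p r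
  antisymm : ∀ p ∈ Q, ∀ q ∈ Q, le p q → le q p → p = q
  ccc : ∀ S ⊆ Q, (∀ p ∈ S, ∀ q ∈ S, p ≠ q → ¬ QCompat Q le p q) → S.Countable

/-- A maximal antichain of a Souslin forcing notion. -/
def SouslinCCC.MaxAntichain (T : SouslinCCC) (A : Set (ℕ → ℕ)) : Prop :=
  A ⊆ T.Q ∧ (∀ p ∈ A, ∀ q ∈ A, p ≠ q → ¬ QCompat T.Q T.le p q) ∧
    ∀ p ∈ T.Q, ∃ q ∈ A, QCompat T.Q T.le p q

/-- A complete embedding of a forcing notion `(P, leP)` into a ccc Souslin forcing notion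
`T`: it is order preserving, preserves incompatibility in both directions, and maps maximal
antichains of `P` onto maximal antichains of `T`. -/
def CompleteEmbedding {P : Type} (leP : P → P → Prop) (T : SouslinCCC)
    (e : P → (ℕ → ℕ)) : Prop :=
  (∀ p : P, e p ∈ T.Q) ∧
  (∀ p q : P, leP p q → T.le (e p) (e q)) ∧
  (∀ p q : P, ¬ PCompat leP p q ↔ ¬ QCompat T.Q T.le (e p) (e q)) ∧
  (∀ A : Set P, PMaxAntichain leP A → T.MaxAntichain (e '' A))

lemma restrict_ext {ρ η : ℕ → Bool} {n m : ℕ} (h : restrict ρ n = restrict η n)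
    (hm : m < n) : ρ m = η m := by
  have h' : (fun i : Fin n => ρ i) = fun i : Fin n => η i := List.ofFn_inj.mp h
  exact congrFun h' ⟨m, hm⟩

lemma qle_refl {A : Set (ℕ → Bool)} (p : QACond A) : QACond.le p p :=
  ⟨fun _ _ h => h, subset_rfl, fun _ h hn _ => absurd hn h⟩

lemma qle_trans {A : Set (ℕ → Bool)} {p q r : QACond A}
    (h1 : QACond.le p q) (h2 : QACond.le q r) : QACond.le p r := by
  refine ⟨fun ν b hb => h2.1 ν b (h1.1 ν b hb), h1.2.1.trans h2.2.1, ?_⟩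
  intro ν hr hp hex
  by_cases hq : q.1.1 ν = none
  · obtain ⟨η, hη, hηr⟩ := hex
    exact h2.2.2 ν hr hq ⟨η, h1.2.1 hη, hηr⟩
  · exact h2.1 ν true (h1.2.2 ν hq hp hex)

lemma pcompat_symm {P : Type} {le : P → P → Prop} {p q : P}
    (h : PCompat le p q) : PCompat le q p := by
  obtain ⟨r, h1, h2⟩ := h; exact ⟨r, h2, h1⟩

/-- The condition `⟨{⟨ν,0⟩}, ∅⟩`. -/
def pNu (A : Set (ℕ → Bool)) (ν : List Bool) : QACond A :=
  ⟨⟨fun μ => if μ = ν then some false else none, ∅⟩, by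
    refine ⟨Set.Finite.subset (Set.finite_singleton ν) ?_, Set.empty_subset _,
      Set.finite_empty⟩
    intro μ hμ
    simp only [Set.mem_setOf_eq] at hμ
    by_contra hc
    simp only [Set.mem_singleton_iff] at hc
    simp [hc] at hμ⟩

/-- The condition `⟨∅, {η}⟩` for `η ∈ A`. -/
def pEta (A : Set (ℕ → Bool)) (η : ℕ → Bool) (hη : η ∈ A) : QACond A :=
  ⟨⟨fun _ => none, {η}⟩, by
    refine ⟨?_, Set.singleton_subset_iff.mpr hη, Set.finite_singleton η⟩
    convert Set.finite_empty
    ext μ; simp⟩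

lemma incompat_pEta_pNu {A : Set (ℕ → Bool)} (η : ℕ → Bool) (hη : η ∈ A) (n : ℕ) :
    ¬ PCompat (QACond.le (A := A)) (pEta A η hη) (pNu A (restrict η n)) := by
  rintro ⟨s, h1, h2⟩
  have hfalse : s.1.1 (restrict η n) = some false := by
    apply h2.1
    simp [pNu]
  have htrue : s.1.1 (restrict η n) = some true := by
    apply h1.2.2
    · rw [hfalse]; simp
    · rfl
    · exact ⟨η, rfl, by rw [restrict_length]⟩
  rw [hfalse] at htrue
  simp at htrue

lemma exists_dom_bound {A : Set (ℕ → Bool)} (p : QACond A) :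
    ∃ N, ∀ ν : List Bool, N ≤ ν.length → p.1.1 ν = none := by
  obtain ⟨N, hN⟩ := (p.2.1.image List.length).bddAbove
  refine ⟨N + 1, fun ν hν => ?_⟩
  by_contra h
  have : ν.length ≤ N := hN (Set.mem_image_of_mem _ h)
  omega

lemma exists_w_bound {η : ℕ → Bool} (w : Set (ℕ → Bool)) (hw : w.Finite)
    (hne : ∀ ρ ∈ w, ρ ≠ η) :
    ∃ N, ∀ n, N ≤ n → ∀ ρ ∈ w, restrict ρ n ≠ restrict η n := by
  have hch : ∀ ρ : w, ∃ m, (ρ : ℕ → Bool) m ≠ η m := by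
    intro ρ
    by_contra h
    push_neg at h
    exact hne ρ ρ.2 (funext h)
  choose m hm using hch
  haveI := hw.fintype
  refine ⟨(Finset.univ.sup fun ρ : w => m ρ) + 1, fun n hn ρ hρ hcon => ?_⟩
  have hlt : m ⟨ρ, hρ⟩ < n := by
    have h2 : m ⟨ρ, hρ⟩ ≤ Finset.univ.sup fun ρ : w => m ρ := by
      simpa using Finset.le_sup (f := fun ρ : w => m ρ) (Finset.mem_univ ⟨ρ, hρ⟩)
    omega
  exact hm ⟨ρ, hρ⟩ (restrict_ext hcon hlt)

lemma dense_step {A : Set (ℕ → Bool)} {η : ℕ → Bool} (hη : η ∉ A) (p : QACond A) :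
    ∃ (n : ℕ) (p' : QACond A), QACond.le p p' ∧ QACond.le (pNu A (restrict η n)) p' := by
  obtain ⟨N₁, hN₁⟩ := exists_dom_bound p
  obtain ⟨N₂, hN₂⟩ := exists_w_bound (η := η) p.1.2 p.2.2.2 (fun ρ hρ h => hη (by rw [← h]; exact p.2.2.1 hρ))
  set n := max N₁ N₂ with hn
  set ν := restrict η n with hν
  have hνlen : ν.length = n := restrict_length _ _
  have hpν : p.1.1 ν = none := hN₁ ν (by rw [hνlen]; exact le_max_left _ _)
  have hw : ∀ ρ ∈ p.1.2, restrict ρ n ≠ ν := fun ρ hρ => hN₂ n (le_max_right _ _) ρ hρ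
  refine ⟨n, ⟨⟨fun μ => if μ = ν then some false else p.1.1 μ, p.1.2⟩,
    ?_, p.2.2.1, p.2.2.2⟩, ⟨?_, subset_rfl, ?_⟩, ⟨?_, Set.empty_subset _, ?_⟩⟩
  · apply Set.Finite.subset (p.2.1.insert ν)
    intro μ hμ
    simp only [Set.mem_setOf_eq] at hμ
    by_cases hc : μ = ν
    · exact Set.mem_insert_iff.mpr (Or.inl hc)
    · simp only [if_neg hc] at hμ
      exact Set.mem_insert_iff.mpr (Or.inr hμ)
  · intro μ b hb
    by_cases hc : μ = ν
    · subst hc; rw [hpν] at hb; cases hb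
    · simp only [if_neg hc]; exact hb
  · intro μ hne hnone hex
    by_cases hc : μ = ν
    · subst hc
      obtain ⟨ρ, hρ, hr⟩ := hex
      rw [hνlen] at hr
      exact absurd hr (hw ρ hρ)
    · simp only [if_neg hc] at hne
      exact absurd hnone hne
  · intro μ b hb
    simp only [pNu] at hb
    by_cases hc : μ = ν
    · simp only [if_pos hc, if_pos (hc.trans hν)] at hb ⊢; exact hb
    · simp only [if_neg (fun h : μ = restrict η n => hc (h.trans hν.symm))] at hb
      exact nomatch hb
  · intro μ _ h0 hex
    obtain ⟨ρ, hρ, _⟩ := hex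
    exact absurd hρ (Set.notMem_empty ρ)

lemma exists_maxAntichain_subset {P : Type} (le : P → P → Prop)
    (hrefl : ∀ p, le p p) (htrans : ∀ {p q r}, le p q → le q r → le p r)
    (D : Set P) (hD : ∀ p, ∃ p' ∈ D, le p p') :
    ∃ I ⊆ D, PMaxAntichain le I := by
  have hchainub : ∀ c ⊆ {I : Set P | I ⊆ D ∧ PAntichain le I}, IsChain (· ⊆ ·) c →
      ∃ ub ∈ {I : Set P | I ⊆ D ∧ PAntichain le I}, ∀ s ∈ c, s ⊆ ub := by
    intro c hc hchain
    refine ⟨⋃₀ c, ⟨?_, ?_⟩, fun s hs => Set.subset_sUnion_of_mem hs⟩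
    · exact Set.sUnion_subset fun s hs => (hc hs).1
    · intro x hx y hy hxy
      obtain ⟨s, hs, hxs⟩ := hx
      obtain ⟨t, ht, hyt⟩ := hy
      rcases hchain.total hs ht with h | h
      · exact (hc ht).2 x (h hxs) y hyt hxy
      · exact (hc hs).2 x hxs y (h hyt) hxy
  obtain ⟨M, hM⟩ := zorn_subset {I : Set P | I ⊆ D ∧ PAntichain le I} hchainub
  · refine ⟨M, hM.1.1, hM.1.2, ?_⟩
    intro p
    obtain ⟨p', hp'D, hpp'⟩ := hD p
    have hcompat : ∃ q ∈ M, PCompat le q p' := by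
      by_contra hno
      push_neg at hno
      have hmem : M ∪ {p'} ∈ {I : Set P | I ⊆ D ∧ PAntichain le I} := by
        constructor
        · exact Set.union_subset hM.1.1 (Set.singleton_subset_iff.mpr hp'D)
        · intro x hx y hy hxy
          rcases hx with hx | hx <;> rcases hy with hy | hy
          · exact hM.1.2 x hx y hy hxy
          · rw [Set.mem_singleton_iff] at hy; subst hy
            exact hno x hx
          · rw [Set.mem_singleton_iff] at hx; subst hx
            exact fun h => hno y hy (pcompat_symm h)
          · rw [Set.mem_singleton_iff] at hx hy; subst hx; subst hy
            exact absurd rfl hxy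
      have : M ∪ {p'} ⊆ M := hM.2 hmem Set.subset_union_left
      have hp'M : p' ∈ M := this (Or.inr rfl)
      exact hno p' hp'M ⟨p', hrefl p', hrefl p'⟩
    obtain ⟨q, hqM, s, hqs, hp's⟩ := hcompat
    exact ⟨q, hqM, s, htrans hpp' hp's, hqs⟩

lemma analyticSet_inter {X : Type*} [TopologicalSpace X] [T2Space X] {s t : Set X}
    (hs : MeasureTheory.AnalyticSet s) (ht : MeasureTheory.AnalyticSet t) :
    MeasureTheory.AnalyticSet (s ∩ t) := by
  have h : s ∩ t = ⋂ b : Bool, cond b s t := by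
    ext x
    simp [Bool.forall_bool, and_comm]
  rw [h]
  exact MeasureTheory.AnalyticSet.iInter fun b => by cases b <;> simpa

/-- If `A ⊆ 2^ω` is not analytic then there is no complete embedding of `Q^A` into any
ccc Souslin forcing notion. -/
theorem qa_no_complete_embedding (A : Set (ℕ → Bool))
    (hA : ¬ MeasureTheory.AnalyticSet A) :
    ∀ (T : SouslinCCC) (e : QACond A → (ℕ → ℕ)),
      ¬ CompleteEmbedding (QACond.le (A := A)) T e := by
  intro T e hce
  apply hA
  obtain ⟨hmem, hmono, hiff, hmax⟩ := hce
  set f : List Bool → (ℕ → ℕ) := fun ν => e (pNu A ν) with hf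
  set I : Set ((ℕ → ℕ) × (ℕ → ℕ)) :=
    {x | x.1 ∈ T.Q ∧ x.2 ∈ T.Q ∧ ¬ QCompat T.Q T.le x.1 x.2} with hIdef
  have hI : MeasureTheory.AnalyticSet I := T.analytic_incompat
  have key : A = Prod.fst '' (⋂ n : ℕ, ⋃ g : Fin n → Bool,
      {x : (ℕ → Bool) × (ℕ → ℕ) | (fun i : Fin n => x.1 i) = g} ∩
      ((fun x : (ℕ → Bool) × (ℕ → ℕ) => (x.2, f (List.ofFn g))) ⁻¹' I)) := by
    ext η
    constructor
    · intro hη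
      refine ⟨(η, e (pEta A η hη)), ?_, rfl⟩
      rw [Set.mem_iInter]
      intro n
      rw [Set.mem_iUnion]
      refine ⟨fun i : Fin n => η i, rfl, ?_, ?_, ?_⟩
      · exact hmem _
      · exact hmem _
      · exact (hiff _ _).mp (incompat_pEta_pNu η hη n)
    · rintro ⟨⟨η', q⟩, hxmem, rfl⟩
      simp only at *
      have hkey : ∀ n : ℕ, q ∈ T.Q ∧ ¬ QCompat T.Q T.le q (f (restrict η' n)) := by
        intro n
        have h1 := Set.mem_iInter.mp hxmem n
        rw [Set.mem_iUnion] at h1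
        obtain ⟨g, hg1, hg2⟩ := h1
        have hgeq : (fun i : Fin n => η' i) = g := hg1
        subst hgeq
        exact ⟨hg2.1, hg2.2.2⟩
      by_contra hη'
      set D : Set (QACond A) := {p' | ∃ m, QACond.le (pNu A (restrict η' m)) p'} with hD
      have hdense : ∀ p : QACond A, ∃ p' ∈ D, QACond.le p p' := by
        intro p
        obtain ⟨n, p', h1, h2⟩ := dense_step hη' p
        exact ⟨p', ⟨n, h2⟩, h1⟩
      obtain ⟨J, hJD, hJmax⟩ := exists_maxAntichain_subset (QACond.le (A := A))
        qle_refl (fun {p q r} => qle_trans) D hdense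
      have hTmax := hmax J hJmax
      obtain ⟨a, ⟨p₀, hp₀J, rfl⟩, s, hsQ, hqs, has⟩ := hTmax.2.2 q (hkey 0).1
      obtain ⟨m, hm⟩ := hJD hp₀J
      have h3 : T.le (f (restrict η' m)) (e p₀) := hmono _ _ hm
      have h4 : T.le (f (restrict η' m)) s :=
        T.trans _ (hmem _) _ (hmem _) _ hsQ h3 has
      exact (hkey m).2 ⟨s, hsQ, hqs, h4⟩
  rw [key]
  haveI : PolishSpace ((ℕ → Bool) × (ℕ → ℕ)) := {}
  apply MeasureTheory.AnalyticSet.image_of_continuous ?_ continuous_fst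
  apply MeasureTheory.AnalyticSet.iInter
  intro n
  apply MeasureTheory.AnalyticSet.iUnion
  intro g
  apply analyticSet_inter
  · refine IsClosed.analyticSet (isClosed_singleton.preimage ?_)
    exact continuous_pi fun i => (continuous_apply (i : ℕ)).comp continuous_fst
  · exact hI.preimage (Continuous.prodMk continuous_snd continuous_const)
end
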